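/- Let (x_i)_{i∈I} be a finite nonempty family of points of ℝ^n and let τ > 0. Define, for y ∈ ℝ^n, the Gaussian weights w_i(y) := exp(−‖y−x_i‖²/(2τ)), the mixture m(y) := Σ_{i∈I} w_i(y), the normalized weights π_i(y) := w_i(y)/m(y), the barycenter b(y) := Σ_{i∈I} π_i(y) x_i, the centered points x̃_i(y) := x_i − b(y), the drift ṁ(y) := y − b(y), the field F(y) := τ^{−1} Σ_{i∈I} π_i(y) ⟨y − x_i, x̃_i(y)⟩ x̃_i(y), and the quantum potential Q(y) := −Δ√(m)(y) / (2√(m)(y)). Then for every y ∈ ℝ^n one has 4τ² ∇Q(y) = −ṁ(y) + F(y). -/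

import Mathlib

open scoped RealInnerProductSpace BigOperators
set_option maxHeartbeats 1000000
set_option linter.unusedSectionVars false

noncomputable section

/-- Gaussian weight `w_i(y) = exp(−‖y−x_i‖²/(2τ))`. -/
def gaussW {n : ℕ} {I : Type*} (x : I → EuclideanSpace ℝ (Fin n)) (τ : ℝ) (i : I)
    (y : EuclideanSpace ℝ (Fin n)) : ℝ :=
  Real.exp (-‖y - x i‖ ^ 2 / (2 * τ))

/-- The Gaussian mixture `m(y) = ∑_i w_i(y)`. -/
def mix {n : ℕ} {I : Type*} [Fintype I] (x : I → EuclideanSpace ℝ (Fin n)) (τ : ℝ)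
    (y : EuclideanSpace ℝ (Fin n)) : ℝ :=
  ∑ i, gaussW x τ i y

/-- Normalized weight `π_i(y) = w_i(y)/m(y)`. -/
def piW {n : ℕ} {I : Type*} [Fintype I] (x : I → EuclideanSpace ℝ (Fin n)) (τ : ℝ) (i : I)
    (y : EuclideanSpace ℝ (Fin n)) : ℝ :=
  gaussW x τ i y / mix x τ y

/-- The barycenter `b(y) = ∑_i π_i(y) x_i`. -/
def bary {n : ℕ} {I : Type*} [Fintype I] (x : I → EuclideanSpace ℝ (Fin n)) (τ : ℝ)
    (y : EuclideanSpace ℝ (Fin n)) : EuclideanSpace ℝ (Fin n) :=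
  ∑ i, piW x τ i y • x i

/-- The centered point `x̃_i(y) = x_i − b(y)`. -/
def xtil {n : ℕ} {I : Type*} [Fintype I] (x : I → EuclideanSpace ℝ (Fin n)) (τ : ℝ) (i : I)
    (y : EuclideanSpace ℝ (Fin n)) : EuclideanSpace ℝ (Fin n) :=
  x i - bary x τ y

/-- The drift `ṁ(y) = y − b(y)`. -/
def mdot {n : ℕ} {I : Type*} [Fintype I] (x : I → EuclideanSpace ℝ (Fin n)) (τ : ℝ)
    (y : EuclideanSpace ℝ (Fin n)) : EuclideanSpace ℝ (Fin n) :=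
  y - bary x τ y

/-- The field `F(y) = τ⁻¹ ∑_i π_i(y) ⟪y − x_i, x̃_i(y)⟫ x̃_i(y)`. -/
def quantumForce {n : ℕ} {I : Type*} [Fintype I] (x : I → EuclideanSpace ℝ (Fin n)) (τ : ℝ)
    (y : EuclideanSpace ℝ (Fin n)) : EuclideanSpace ℝ (Fin n) :=
  τ⁻¹ • ∑ i, (piW x τ i y * ⟪y - x i, xtil x τ i y⟫) • xtil x τ i y

/-- The Laplacian on `ℝ^n`, as the sum of the second partial derivatives. -/
def lap {n : ℕ} (f : EuclideanSpace ℝ (Fin n) → ℝ) (y : EuclideanSpace ℝ (Fin n)) : ℝ :=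
  ∑ j, fderiv ℝ (fun z => fderiv ℝ f z (EuclideanSpace.single j 1)) y (EuclideanSpace.single j 1)

/-- The quantum potential `Q(y) = −Δ√m(y)/(2√m(y))` of the Gaussian mixture. -/
def quantumPot {n : ℕ} {I : Type*} [Fintype I] (x : I → EuclideanSpace ℝ (Fin n)) (τ : ℝ)
    (y : EuclideanSpace ℝ (Fin n)) : ℝ :=
  -lap (fun z => Real.sqrt (mix x τ z)) y / (2 * Real.sqrt (mix x τ y))

section Aux

variable {n : ℕ} {I : Type*} [Fintype I] [Nonempty I]
  (x : I → EuclideanSpace ℝ (Fin n)) (τ : ℝ)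

local notation "E" => EuclideanSpace ℝ (Fin n)

/-- `V y = ∑ i, w_i y • (y - x i)`. -/
def Vv (y : E) : E := ∑ i, gaussW x τ i y • (y - x i)

def Aa (y : E) : ℝ := ∑ i, gaussW x τ i y * ‖y - x i‖ ^ 2

def Bb (y : E) : E := ∑ i, (gaussW x τ i y * ‖y - x i‖ ^ 2) • (y - x i)

def Mm (y : E) : E := ∑ i, (gaussW x τ i y * ⟪y - x i, Vv x τ y⟫) • (y - x i)

/-- Jacobian of `Vv`. -/
def Vd (z : E) : E →L[ℝ] E :=
  (mix x τ z) • ContinuousLinearMap.id ℝ E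
    - τ⁻¹ • ∑ i, gaussW x τ i z • ((innerSL ℝ (z - x i)).smulRight (z - x i))

lemma gaussW_pos (i : I) (y : E) : 0 < gaussW x τ i y := Real.exp_pos _

lemma mix_pos (y : E) : 0 < mix x τ y :=
  Finset.sum_pos (fun i _ => gaussW_pos x τ i y) Finset.univ_nonempty

lemma inner_sum_smul (c : I → ℝ) (v : I → E) (e : E) :
    ⟪∑ i, c i • v i, e⟫ = ∑ i, c i * ⟪v i, e⟫ := by
  rw [sum_inner]
  exact Finset.sum_congr rfl fun i _ => real_inner_smul_left _ _ _

lemma inner_sum_smul' (c : I → ℝ) (v : I → E) (e : E) :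
    ⟪e, ∑ i, c i • v i⟫ = ∑ i, c i * ⟪e, v i⟫ := by
  rw [real_inner_comm, inner_sum_smul]
  exact Finset.sum_congr rfl fun i _ => by rw [real_inner_comm]

lemma hW (hτ : τ ≠ 0) (i : I) (z : E) :
    HasFDerivAt (gaussW x τ i) ((-(τ⁻¹ * gaussW x τ i z)) • innerSL ℝ (z - x i)) z := by
  have h1 := ((hasFDerivAt_id z).sub_const (x i)).norm_sq
  have h2 := ((h1.neg.mul_const ((2 * τ)⁻¹)).exp)
  show HasFDerivAt (fun w : E => Real.exp (-‖w - x i‖ ^ 2 / (2 * τ))) _ z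
  simp only [div_eq_mul_inv]
  refine h2.congr_fderiv (Eq.symm ?_)
  ext w
  simp only [gaussW, ContinuousLinearMap.smul_apply, innerSL_apply_apply, smul_eq_mul,
    ContinuousLinearMap.neg_apply, ContinuousLinearMap.smulRight_apply,
    ContinuousLinearMap.comp_apply, ContinuousLinearMap.id_apply,
    ContinuousLinearMap.sub_apply, ContinuousLinearMap.coe_smul', Pi.smul_apply,
    inner_sub_left, div_eq_mul_inv, nsmul_eq_mul, Pi.neg_apply, id]
  field_simp
  ring

lemma hMix (hτ : τ ≠ 0) (z : E) :
    HasFDerivAt (mix x τ) ((-τ⁻¹ : ℝ) • innerSL ℝ (Vv x τ z)) z := by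
  have h := HasFDerivAt.fun_sum (fun i (_ : i ∈ Finset.univ) => hW x τ hτ i z)
  refine h.congr_fderiv (Eq.symm ?_)
  ext e
  simp only [ContinuousLinearMap.smul_apply, innerSL_apply_apply, smul_eq_mul,
    ContinuousLinearMap.sum_apply]
  rw [Vv, inner_sum_smul, Finset.mul_sum]
  exact Finset.sum_congr rfl fun i _ => by ring


lemma hV (hτ : τ ≠ 0) (z : E) : HasFDerivAt (Vv x τ) (Vd x τ z) z := by
  have h := HasFDerivAt.fun_sum (fun i (_ : i ∈ Finset.univ) =>
    (hW x τ hτ i z).smul ((hasFDerivAt_id z).sub_const (x i)))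
  have he : Vv x τ = fun y => ∑ i, gaussW x τ i y • (y - x i) := rfl
  rw [he]
  refine h.congr_fderiv (Eq.symm ?_)
  refine ContinuousLinearMap.ext fun e => ?_
  simp only [Vd, ContinuousLinearMap.sum_apply, ContinuousLinearMap.add_apply,
    ContinuousLinearMap.smul_apply, ContinuousLinearMap.coe_smul', Pi.smul_apply,
    ContinuousLinearMap.id_apply, ContinuousLinearMap.smulRight_apply, innerSL_apply_apply,
    ContinuousLinearMap.coe_sub', Pi.sub_apply, ContinuousLinearMap.id_apply, id]
  rw [Finset.sum_add_distrib, Finset.smul_sum, ← Finset.sum_smul]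
  rw [show (mix x τ z) = ∑ i, gaussW x τ i z from rfl]
  rw [sub_eq_add_neg, ← Finset.sum_neg_distrib]
  congr 1
  exact Finset.sum_congr rfl fun i _ => by
    simp only [smul_smul, smul_eq_mul, ← neg_smul]
    congr 1
    ring

lemma parseval (u v : E) :
    ∑ j, ⟪(EuclideanSpace.single j 1 : E), u⟫ * ⟪(EuclideanSpace.single j 1 : E), v⟫
      = ⟪u, v⟫ := by
  have h := (EuclideanSpace.basisFun (Fin n) ℝ).sum_inner_mul_inner u v
  simp only [EuclideanSpace.basisFun_apply] at h
  rw [← h]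
  exact Finset.sum_congr rfl fun j _ => by rw [real_inner_comm]

lemma single_inner_self (j : Fin n) :
    ⟪(EuclideanSpace.single j 1 : E), (EuclideanSpace.single j 1 : E)⟫ = (1 : ℝ) := by
  rw [real_inner_self_eq_norm_sq, EuclideanSpace.norm_single]
  norm_num


lemma hSqrt (hτ : τ ≠ 0) (z : E) :
    HasFDerivAt (fun w => Real.sqrt (mix x τ w))
      ((-τ⁻¹ * (2 * Real.sqrt (mix x τ z))⁻¹) • innerSL ℝ (Vv x τ z)) z := by
  have h := (hMix x τ hτ z).sqrt (mix_pos x τ z).ne'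
  refine h.congr_fderiv (Eq.symm ?_)
  rw [smul_smul]
  congr 1
  rw [one_div]
  ring

lemma inner_Vd_self (y : E) (j : Fin n) :
    ⟪(EuclideanSpace.single j 1 : E), Vd x τ y (EuclideanSpace.single j 1)⟫
      = mix x τ y - τ⁻¹ * ∑ i, gaussW x τ i y *
          (⟪(EuclideanSpace.single j 1 : E), y - x i⟫ *
           ⟪(EuclideanSpace.single j 1 : E), y - x i⟫) := by
  simp only [Vd, ContinuousLinearMap.sub_apply, ContinuousLinearMap.smul_apply,
    ContinuousLinearMap.coe_smul', Pi.smul_apply, ContinuousLinearMap.id_apply,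
    ContinuousLinearMap.sum_apply, ContinuousLinearMap.smulRight_apply, innerSL_apply_apply]
  rw [inner_sub_right, real_inner_smul_right, single_inner_self, mul_one,
    real_inner_smul_right]
  congr 1
  rw [inner_sum_smul']
  congr 1
  refine Finset.sum_congr rfl fun i _ => ?_
  rw [real_inner_smul_right]
  rw [real_inner_comm (y - x i) (EuclideanSpace.single j 1)]


lemma lap_sqrt_mix (hτ : τ ≠ 0) (y : E) :
    lap (fun w => Real.sqrt (mix x τ w)) y
      = -τ⁻¹ * ((2 * Real.sqrt (mix x τ y))⁻¹ *
            ((n : ℝ) * mix x τ y - τ⁻¹ * Aa x τ y)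
          + (-(((2 * Real.sqrt (mix x τ y)) ^ 2)⁻¹) * (2 * (-τ⁻¹ *
              (2 * Real.sqrt (mix x τ y))⁻¹))) * ‖Vv x τ y‖ ^ 2) := by
  have hm0 : (0:ℝ) < mix x τ y := mix_pos x τ y
  have hs0 : (0:ℝ) < Real.sqrt (mix x τ y) := Real.sqrt_pos.mpr hm0
  have hfe : ∀ j : Fin n, (fun z => fderiv ℝ (fun w => Real.sqrt (mix x τ w)) z
        (EuclideanSpace.single j 1))
      = fun z => -τ⁻¹ * ((2 * Real.sqrt (mix x τ z))⁻¹ *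
          ⟪(EuclideanSpace.single j 1 : E), Vv x τ z⟫) := by
    intro j
    funext z
    rw [(hSqrt x τ hτ z).fderiv]
    simp only [ContinuousLinearMap.smul_apply, innerSL_apply_apply, smul_eq_mul]
    rw [real_inner_comm]
    ring
  -- derivative of (2 * sqrt (mix z))⁻¹ at y
  have hc : HasFDerivAt (fun z => 2 * Real.sqrt (mix x τ z))
      ((2:ℝ) • ((-τ⁻¹ * (2 * Real.sqrt (mix x τ y))⁻¹) • innerSL ℝ (Vv x τ y))) y :=
    (hSqrt x τ hτ y).const_mul 2
  have hr : HasFDerivAt (fun z => (2 * Real.sqrt (mix x τ z))⁻¹)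
      ((-(((2 * Real.sqrt (mix x τ y)) ^ 2)⁻¹)) •
        ((2:ℝ) • ((-τ⁻¹ * (2 * Real.sqrt (mix x τ y))⁻¹) • innerSL ℝ (Vv x τ y)))) y := by
    have h2 : (2 * Real.sqrt (mix x τ y)) ≠ 0 := by positivity
    exact (hasDerivAt_inv h2).comp_hasFDerivAt y hc
  have key : ∀ j : Fin n,
      fderiv ℝ (fun z => -τ⁻¹ * ((2 * Real.sqrt (mix x τ z))⁻¹ *
          ⟪(EuclideanSpace.single j 1 : E), Vv x τ z⟫)) y (EuclideanSpace.single j 1)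
      = -τ⁻¹ * ((2 * Real.sqrt (mix x τ y))⁻¹ *
            ⟪(EuclideanSpace.single j 1 : E), Vd x τ y (EuclideanSpace.single j 1)⟫
          + (-(((2 * Real.sqrt (mix x τ y)) ^ 2)⁻¹) * (2 * (-τ⁻¹ *
              (2 * Real.sqrt (mix x τ y))⁻¹))) *
            (⟪(EuclideanSpace.single j 1 : E), Vv x τ y⟫ *
             ⟪(EuclideanSpace.single j 1 : E), Vv x τ y⟫)) := by
    intro j
    have hsj : HasFDerivAt (fun z => ⟪(EuclideanSpace.single j 1 : E), Vv x τ z⟫)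
        ((innerSL ℝ (EuclideanSpace.single j 1 : E)).comp (Vd x τ y)) y :=
      (innerSL ℝ (EuclideanSpace.single j 1 : E)).hasFDerivAt.comp y (hV x τ hτ y)
    have hprod : HasFDerivAt (fun z => -τ⁻¹ * ((2 * Real.sqrt (mix x τ z))⁻¹ *
          ⟪(EuclideanSpace.single j 1 : E), Vv x τ z⟫)) _ y := (hr.mul hsj).const_mul (-τ⁻¹)
    rw [hprod.fderiv]
    simp only [ContinuousLinearMap.smul_apply, ContinuousLinearMap.add_apply,
      ContinuousLinearMap.coe_smul', Pi.smul_apply, ContinuousLinearMap.comp_apply,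
      innerSL_apply_apply, smul_eq_mul]
    rw [real_inner_comm (Vv x τ y)]
    ring
  -- assemble
  rw [lap]
  have := fun j : Fin n => congrFun (hfe j) -- unused
  calc ∑ j, fderiv ℝ (fun z => fderiv ℝ (fun w => Real.sqrt (mix x τ w)) z
        (EuclideanSpace.single j 1)) y (EuclideanSpace.single j 1)
      = ∑ j : Fin n, -τ⁻¹ * ((2 * Real.sqrt (mix x τ y))⁻¹ *
            ⟪(EuclideanSpace.single j 1 : E), Vd x τ y (EuclideanSpace.single j 1)⟫
          + (-(((2 * Real.sqrt (mix x τ y)) ^ 2)⁻¹) * (2 * (-τ⁻¹ *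
              (2 * Real.sqrt (mix x τ y))⁻¹))) *
            (⟪(EuclideanSpace.single j 1 : E), Vv x τ y⟫ *
             ⟪(EuclideanSpace.single j 1 : E), Vv x τ y⟫)) := by
        refine Finset.sum_congr rfl fun j _ => ?_
        rw [hfe j, key j]
    _ = -τ⁻¹ * ((2 * Real.sqrt (mix x τ y))⁻¹ *
            ((n : ℝ) * mix x τ y - τ⁻¹ * Aa x τ y)
          + (-(((2 * Real.sqrt (mix x τ y)) ^ 2)⁻¹) * (2 * (-τ⁻¹ *
              (2 * Real.sqrt (mix x τ y))⁻¹))) * ‖Vv x τ y‖ ^ 2) := by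
        rw [← Finset.mul_sum, Finset.sum_add_distrib, ← Finset.mul_sum, ← Finset.mul_sum]
        have h1 : ∑ j : Fin n, ⟪(EuclideanSpace.single j 1 : E),
              Vd x τ y (EuclideanSpace.single j 1)⟫
            = (n : ℝ) * mix x τ y - τ⁻¹ * Aa x τ y := by
          have := fun j => inner_Vd_self x τ y j
          rw [Finset.sum_congr rfl fun j _ => this j]
          rw [Finset.sum_sub_distrib, Finset.sum_const, ← Finset.mul_sum]
          simp only [Finset.card_univ, Fintype.card_fin, nsmul_eq_mul]
          congr 1
          rw [Finset.sum_comm]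
          rw [Aa, Finset.mul_sum, ← Finset.mul_sum]
          congr 1
          refine Finset.sum_congr rfl fun i _ => ?_
          rw [← Finset.mul_sum, parseval, real_inner_self_eq_norm_sq]
        have h2 : ∑ j : Fin n, ⟪(EuclideanSpace.single j 1 : E), Vv x τ y⟫ *
              ⟪(EuclideanSpace.single j 1 : E), Vv x τ y⟫ = ‖Vv x τ y‖ ^ 2 := by
          rw [parseval, real_inner_self_eq_norm_sq]
        rw [h1, h2]

/-- closed form whose gradient we compute -/
def Gg (y : E) : ℝ :=
  (n : ℝ) * τ - Aa x τ y * (mix x τ y)⁻¹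
    + (2⁻¹ * ‖Vv x τ y‖ ^ 2) * ((mix x τ y)⁻¹ * (mix x τ y)⁻¹)

lemma quantumPot_eq (hτ : τ ≠ 0) :
    quantumPot x τ = fun y => (4 * τ ^ 2)⁻¹ * Gg x τ y := by
  funext y
  have hm0 := mix_pos x τ y
  have hs0 : 0 < Real.sqrt (mix x τ y) := Real.sqrt_pos.mpr hm0
  rw [quantumPot, lap_sqrt_mix x τ hτ y, Gg]
  set s := Real.sqrt (mix x τ y) with hs
  have hsq : s ^ 2 = mix x τ y := Real.sq_sqrt hm0.le
  rw [← hsq]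
  field_simp
  ring

lemma bary_smul (y : E) : mix x τ y • bary x τ y = ∑ i, gaussW x τ i y • x i := by
  rw [bary, Finset.smul_sum]
  refine Finset.sum_congr rfl fun i _ => ?_
  rw [smul_smul, piW]
  congr 1
  rw [mul_comm]
  exact div_mul_cancel₀ _ (mix_pos x τ y).ne'

lemma Vv_eq_smul_mdot (y : E) : Vv x τ y = mix x τ y • mdot x τ y := by
  rw [mdot, smul_sub, bary_smul, Vv]
  rw [show (mix x τ y) = ∑ i, gaussW x τ i y from rfl, Finset.sum_smul,
    ← Finset.sum_sub_distrib]
  exact Finset.sum_congr rfl fun i _ => (smul_sub _ _ _)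

lemma mdot_eq (y : E) : mdot x τ y = (mix x τ y)⁻¹ • Vv x τ y := by
  rw [Vv_eq_smul_mdot, smul_smul, inv_mul_cancel₀ (mix_pos x τ y).ne', one_smul]

lemma xtil_eq (i : I) (y : E) : xtil x τ i y = mdot x τ y - (y - x i) := by
  rw [xtil, mdot]; abel

lemma sumN (y : E) :
    ∑ i, gaussW x τ i y * ⟪y - x i, Vv x τ y⟫ = ‖Vv x τ y‖ ^ 2 := by
  have h := inner_sum_smul (fun i => gaussW x τ i y) (fun i => y - x i) (Vv x τ y)
  rw [← h]
  have h2 : (∑ i, gaussW x τ i y • (y - x i)) = Vv x τ y := rfl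
  rw [h2, real_inner_self_eq_norm_sq]

lemma sumVe (y e : E) :
    ∑ i, gaussW x τ i y * ⟪y - x i, e⟫ = ⟪Vv x τ y, e⟫ := by
  have h := inner_sum_smul (fun i => gaussW x τ i y) (fun i => y - x i) e
  rw [← h]
  rfl

lemma sumM (y e : E) :
    ∑ i, gaussW x τ i y * (⟪y - x i, Vv x τ y⟫ * ⟪y - x i, e⟫) = ⟪Mm x τ y, e⟫ := by
  rw [Mm, inner_sum_smul]
  exact Finset.sum_congr rfl fun i _ => by ring

lemma sumB (y e : E) :
    ∑ i, gaussW x τ i y * (‖y - x i‖ ^ 2 * ⟪y - x i, e⟫) = ⟪Bb x τ y, e⟫ := by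
  rw [Bb, inner_sum_smul]
  exact Finset.sum_congr rfl fun i _ => by ring

lemma F_inner (y e : E) :
    ⟪quantumForce x τ y, e⟫
      = τ⁻¹ * ((mix x τ y)⁻¹ * (mix x τ y)⁻¹ * (mix x τ y)⁻¹ * ‖Vv x τ y‖ ^ 2
            * ⟪Vv x τ y, e⟫
          - (mix x τ y)⁻¹ * (mix x τ y)⁻¹ * ⟪Mm x τ y, e⟫
          - (mix x τ y)⁻¹ * (mix x τ y)⁻¹ * Aa x τ y * ⟪Vv x τ y, e⟫
          + (mix x τ y)⁻¹ * ⟪Bb x τ y, e⟫) := by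
  have hm := (mix_pos x τ y).ne'
  rw [quantumForce, real_inner_smul_left, inner_sum_smul]
  have hterm : ∀ (u : E) (w : ℝ),
      (w * (mix x τ y)⁻¹ * ⟪u, (mix x τ y)⁻¹ • Vv x τ y - u⟫)
          * ⟪(mix x τ y)⁻¹ • Vv x τ y - u, e⟫
        = ((mix x τ y)⁻¹ * (mix x τ y)⁻¹ * (mix x τ y)⁻¹ * ⟪Vv x τ y, e⟫)
              * (w * ⟪u, Vv x τ y⟫)
          - ((mix x τ y)⁻¹ * (mix x τ y)⁻¹) * (w * (⟪u, Vv x τ y⟫ * ⟪u, e⟫))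
          - ((mix x τ y)⁻¹ * (mix x τ y)⁻¹ * ⟪Vv x τ y, e⟫) * (w * ‖u‖ ^ 2)
          + (mix x τ y)⁻¹ * (w * (‖u‖ ^ 2 * ⟪u, e⟫)) := by
    intro u w
    rw [inner_sub_right, inner_sub_left, real_inner_smul_right, real_inner_smul_left,
      real_inner_self_eq_norm_sq]
    ring
  have hstep : ∀ i ∈ (Finset.univ : Finset I),
      (piW x τ i y * ⟪y - x i, xtil x τ i y⟫) * ⟪xtil x τ i y, e⟫
        = (gaussW x τ i y * (mix x τ y)⁻¹ *
            ⟪y - x i, (mix x τ y)⁻¹ • Vv x τ y - (y - x i)⟫)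
            * ⟪(mix x τ y)⁻¹ • Vv x τ y - (y - x i), e⟫ := by
    intro i _
    rw [xtil_eq, mdot_eq, piW, div_eq_mul_inv]
  rw [Finset.sum_congr rfl hstep]
  rw [Finset.sum_congr rfl fun i _ => hterm (y - x i) (gaussW x τ i y)]
  rw [Finset.sum_add_distrib, Finset.sum_sub_distrib, Finset.sum_sub_distrib,
    ← Finset.mul_sum, ← Finset.mul_sum, ← Finset.mul_sum, ← Finset.mul_sum]
  rw [sumN, sumM, sumB]
  rw [show (∑ i, gaussW x τ i y * ‖y - x i‖ ^ 2) = Aa x τ y from rfl]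
  ring

lemma hA (hτ : τ ≠ 0) (y : E) :
    HasFDerivAt (Aa x τ)
      (innerSL ℝ ((-τ⁻¹ : ℝ) • Bb x τ y + (2:ℝ) • Vv x τ y)) y := by
  have h := HasFDerivAt.fun_sum (fun i (_ : i ∈ Finset.univ) =>
    (hW x τ hτ i y).mul (((hasFDerivAt_id y).sub_const (x i)).norm_sq))
  have he : Aa x τ = fun z => ∑ i, gaussW x τ i z * ‖z - x i‖ ^ 2 := rfl
  rw [he]
  refine h.congr_fderiv (Eq.symm ?_)
  refine ContinuousLinearMap.ext fun e => ?_
  simp only [ContinuousLinearMap.sum_apply, ContinuousLinearMap.add_apply,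
    ContinuousLinearMap.smul_apply, ContinuousLinearMap.coe_smul', Pi.smul_apply,
    ContinuousLinearMap.comp_apply, ContinuousLinearMap.id_apply, innerSL_apply_apply,
    smul_eq_mul, nsmul_eq_mul, Nat.cast_ofNat, id]
  rw [inner_add_left, real_inner_smul_left, real_inner_smul_left, ← sumB x τ y e,
    ← sumVe x τ y e]
  rw [Finset.mul_sum, Finset.mul_sum, ← Finset.sum_add_distrib]
  refine Finset.sum_congr rfl fun i _ => ?_
  ring

lemma hN (hτ : τ ≠ 0) (y : E) :
    HasFDerivAt (fun z => ‖Vv x τ z‖ ^ 2)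
      (innerSL ℝ ((2 * mix x τ y) • Vv x τ y - (2 * τ⁻¹) • Mm x τ y)) y := by
  have h := (hV x τ hτ y).norm_sq
  refine h.congr_fderiv (Eq.symm ?_)
  refine ContinuousLinearMap.ext fun e => ?_
  simp only [ContinuousLinearMap.smul_apply, ContinuousLinearMap.comp_apply,
    innerSL_apply_apply, smul_eq_mul, nsmul_eq_mul, Nat.cast_ofNat]
  rw [inner_sub_left, real_inner_smul_left, real_inner_smul_left]
  have hVd : ⟪Vv x τ y, Vd x τ y e⟫
      = mix x τ y * ⟪Vv x τ y, e⟫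
        - τ⁻¹ * ∑ i, gaussW x τ i y * (⟪y - x i, e⟫ * ⟪Vv x τ y, y - x i⟫) := by
    simp only [Vd, ContinuousLinearMap.sub_apply, ContinuousLinearMap.smul_apply,
      ContinuousLinearMap.coe_smul', Pi.smul_apply, ContinuousLinearMap.id_apply,
      ContinuousLinearMap.sum_apply, ContinuousLinearMap.smulRight_apply, innerSL_apply_apply]
    rw [inner_sub_right, real_inner_smul_right, real_inner_smul_right, inner_sum_smul']
    congr 2
    refine Finset.sum_congr rfl fun i _ => ?_
    rw [real_inner_smul_right]
  rw [hVd, ← sumM x τ y e]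
  rw [Finset.mul_sum, Finset.mul_sum]
  rw [mul_sub, ← Finset.mul_sum, Finset.mul_sum, Finset.mul_sum]
  rw [sub_eq_add_neg, sub_eq_add_neg, ← Finset.sum_neg_distrib, ← Finset.sum_neg_distrib]
  congr 1
  · ring
  · refine Finset.sum_congr rfl fun i _ => ?_
    rw [real_inner_comm (Vv x τ y) (y - x i)]
    ring

lemma hMixInv (hτ : τ ≠ 0) (y : E) :
    HasFDerivAt (fun z => (mix x τ z)⁻¹)
      ((-(((mix x τ y)) ^ 2)⁻¹) • ((-τ⁻¹ : ℝ) • innerSL ℝ (Vv x τ y))) y :=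
  (hasDerivAt_inv (mix_pos x τ y).ne').comp_hasFDerivAt y (hMix x τ hτ y)

lemma hGg (hτ : τ ≠ 0) (y : E) :
    HasFDerivAt (Gg x τ)
      (innerSL ℝ (-mdot x τ y + quantumForce x τ y)) y := by
  have hm := (mix_pos x τ y).ne'
  have h1 := (hA x τ hτ y).mul (hMixInv x τ hτ y)
  have h2 := (hN x τ hτ y).const_mul (2⁻¹ : ℝ)
  have h3 := (hMixInv x τ hτ y).mul (hMixInv x τ hτ y)
  have h4 := h2.mul h3
  have h5 := (hasFDerivAt_const ((n : ℝ) * τ) y).sub h1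
  have h6 := h5.add h4
  have h7 : HasFDerivAt (Gg x τ) _ y := h6
  refine h7.congr_fderiv (Eq.symm ?_)
  refine ContinuousLinearMap.ext fun e => ?_
  simp only [ContinuousLinearMap.add_apply, ContinuousLinearMap.sub_apply,
    ContinuousLinearMap.smul_apply, ContinuousLinearMap.coe_smul', Pi.smul_apply,
    ContinuousLinearMap.zero_apply, innerSL_apply_apply, smul_eq_mul, Pi.mul_apply]
  rw [inner_add_left, inner_neg_left, mdot_eq, real_inner_smul_left, F_inner]
  rw [inner_add_left, real_inner_smul_left, real_inner_smul_left]
  rw [inner_sub_left, real_inner_smul_left, real_inner_smul_left]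
  field_simp
  ring

end Aux

/-- Lemma 6.4 of the paper. For a finite nonempty family `(x i)` of points of
`ℝ^n` and `τ > 0`, the gradient of the quantum potential of the Gaussian mixture satisfies
`4τ² ∇Q(y) = −ṁ(y) + F(y)` for every `y ∈ ℝ^n`. -/
theorem statement0 {n : ℕ} {I : Type*} [Fintype I] [Nonempty I]
    (x : I → EuclideanSpace ℝ (Fin n)) (τ : ℝ) (hτ : 0 < τ) (y : EuclideanSpace ℝ (Fin n)) :
    (4 * τ ^ 2) • gradient (quantumPot x τ) y = -mdot x τ y + quantumForce x τ y := by
  have hτ' : τ ≠ 0 := hτ.ne'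
  have hgradG := hGg x τ hτ' y
  have hQ : HasFDerivAt (quantumPot x τ)
      ((4 * τ ^ 2)⁻¹ • innerSL ℝ (-mdot x τ y + quantumForce x τ y)) y := by
    rw [quantumPot_eq x τ hτ']
    exact hgradG.const_mul _
  have hQ' : HasGradientAt (quantumPot x τ)
      ((4 * τ ^ 2)⁻¹ • (-mdot x τ y + quantumForce x τ y)) y := by
    rw [hasGradientAt_iff_hasFDerivAt]
    refine hQ.congr_fderiv (Eq.symm ?_)
    refine ContinuousLinearMap.ext fun e => ?_
    simp only [InnerProductSpace.toDual_apply_apply, ContinuousLinearMap.smul_apply,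
      innerSL_apply_apply, smul_eq_mul]
    rw [real_inner_smul_left]
  rw [hQ'.gradient, smul_smul, mul_inv_cancel₀ (by positivity : (4 * τ ^ 2 : ℝ) ≠ 0), one_smul]

end
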